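/- Let −2 ≤ α < 0 and let M be a positive differentiable function on (0,1) with M′(x) > 0 for all x ∈ (0,1). Then for every x ∈ (0,1), ( B(x) + √(B(x)² − 4A(x)C(x)) ) / (2A(x)) ≥ φ(x). -/

import Mathlib

open Real Set

/-- `φ(x) = ∫₀ˣ (1-t)^α dt`. -/
noncomputable def phi (α : ℝ) (x : ℝ) : ℝ := ∫ t in (0 : ℝ)..x, (1 - t) ^ α

lemma phi_key (α x : ℝ) (hx : x < 1) : (1 + α) * phi α x = 1 - (1 - x) ^ (α + 1) := by
  have h1 : (0:ℝ) < 1 - x := by linarith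
  rcases eq_or_ne α (-1) with h | h
  · subst h
    norm_num
  · have hφ : phi α x = ∫ u in (1-x)..(1:ℝ), u ^ α := by
      rw [phi, intervalIntegral.integral_comp_sub_left (fun u => u ^ α) 1]
      norm_num
    have h0 : (0:ℝ) ∉ Set.uIcc (1-x) 1 := Set.notMem_uIcc_of_lt h1 one_pos
    rw [hφ, integral_rpow (Or.inr ⟨h, h0⟩)]
    have hα1 : α + 1 ≠ 0 := fun hc => h (by linarith)
    rw [Real.one_rpow]
    field_simp
    ring

lemma phi_gt (α x : ℝ) (hα : α < 0) (hx0 : 0 < x) (hx1 : x < 1) : x < phi α x := by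
  have hcont : ContinuousOn (fun t : ℝ => (1 - t) ^ α - 1) (Set.uIcc 0 x) := by
    apply ContinuousOn.sub _ continuousOn_const
    apply ContinuousOn.rpow_const (by fun_prop)
    intro t ht
    left
    rw [Set.uIcc_of_le hx0.le] at ht
    have := ht.2
    intro hc; linarith
  have hint : IntervalIntegrable (fun t : ℝ => (1 - t) ^ α - 1) MeasureTheory.volume 0 x :=
    hcont.intervalIntegrable
  have hpos : 0 < ∫ t in (0:ℝ)..x, ((1 - t) ^ α - 1) := by
    apply intervalIntegral.intervalIntegral_pos_of_pos_on hint _ hx0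
    intro t ht
    have h1 : 0 < 1 - t := by linarith [ht.2]
    have h2 : 1 - t < 1 := by linarith [ht.1]
    have : 1 < (1 - t) ^ α := by
      rw [Real.one_lt_rpow_iff_of_pos h1]
      right; exact ⟨h2, hα⟩
    linarith
  have hsub : (∫ t in (0:ℝ)..x, ((1 - t) ^ α - 1)) = phi α x - x := by
    have hint1 : IntervalIntegrable (fun t : ℝ => (1 - t) ^ α) MeasureTheory.volume 0 x := by
      have := hint.add (intervalIntegrable_const (c := (1:ℝ)))
      simpa using this
    rw [intervalIntegral.integral_sub hint1 (intervalIntegrable_const (c := 1))]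
    simp [phi]
  linarith [hsub ▸ hpos]

/-- `A(x) = (φ(x) - x)/φ(x)²`. -/
noncomputable def Afun (α : ℝ) (x : ℝ) : ℝ := (phi α x - x) / (phi α x) ^ 2

/-- `B(x) = (1 - x - αx) + x(1-x)M'(x)/M(x)`. -/
noncomputable def Bfun (α : ℝ) (M : ℝ → ℝ) (x : ℝ) : ℝ :=
  (1 - x - α * x) + x * (1 - x) * deriv M x / M x

/-- `C(x) = x(1-x)^{α+1}`. -/
noncomputable def Cfun (α : ℝ) (x : ℝ) : ℝ := x * (1 - x) ^ (α + 1)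

/-- For `-2 ≤ α < 0` and `M` positive differentiable on `(0,1)` with `M' > 0`,
`(B + √(B² - 4AC))/(2A) ≥ φ(x)` on `(0,1)`. -/
theorem root_ge_phi (α : ℝ) (hα₁ : -2 ≤ α) (hα₂ : α < 0) (M : ℝ → ℝ)
    (hpos : ∀ x ∈ Ioo (0 : ℝ) 1, 0 < M x)
    (hd : ∀ x ∈ Ioo (0 : ℝ) 1, DifferentiableAt ℝ M x)
    (hd' : ∀ x ∈ Ioo (0 : ℝ) 1, 0 < deriv M x)
    (x : ℝ) (hx : x ∈ Ioo (0 : ℝ) 1) :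
    phi α x ≤
      (Bfun α M x + Real.sqrt ((Bfun α M x) ^ 2 - 4 * Afun α x * Cfun α x)) /
        (2 * Afun α x) := by
  obtain ⟨hx0, hx1⟩ := hx
  set φ := phi α x with hφdef
  have hφx : x < φ := phi_gt α x hα₂ hx0 hx1
  have hφ0 : 0 < φ := lt_trans hx0 hφx
  have hA : 0 < Afun α x := div_pos (by linarith) (by positivity)
  set B := Bfun α M x with hBdef
  set A := Afun α x with hAdef
  set C := Cfun α x with hCdef
  -- s ≥ 0
  have hMx := hpos x ⟨hx0, hx1⟩
  have hM'x := hd' x ⟨hx0, hx1⟩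
  have hs : 0 ≤ x * (1 - x) * deriv M x / M x :=
    le_of_lt (div_pos (mul_pos (mul_pos hx0 (by linarith : (0:ℝ) < 1 - x)) hM'x) hMx)
  have hB : 1 - x * (1 + α) ≤ B := by
    rw [hBdef, Bfun]; nlinarith
  -- key quadratic inequality
  have hAφ2 : A * φ ^ 2 = φ - x := by
    rw [hAdef, Afun, ← hφdef]
    field_simp
  have hCeq : C = x - x * ((1 + α) * φ) := by
    rw [hCdef, Cfun, phi_key α x hx1]; ring
  have hquad : A * φ ^ 2 - B * φ + C ≤ 0 := by
    rw [hAφ2, hCeq]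
    have : φ - x - B * φ + (x - x * ((1 + α) * φ)) = φ * ((1 - x * (1 + α)) - B) := by ring
    rw [this]
    apply mul_nonpos_of_nonneg_of_nonpos hφ0.le
    linarith
  rw [le_div_iff₀ (by positivity)]
  have hsq : 0 ≤ Real.sqrt (B ^ 2 - 4 * A * C) := Real.sqrt_nonneg _
  rcases le_or_gt (φ * (2 * A)) B with h | h
  · linarith
  · have h2 : φ * (2 * A) - B ≤ Real.sqrt (B ^ 2 - 4 * A * C) := by
      apply Real.le_sqrt_of_sq_le
      nlinarith [hquad, hA]
    linarith
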